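/- Let R be a commutative integral domain, t,s units of R, c₀ ∈ R, and define a*b = t·a + s·b + c₀ for a,b ∈ R. Then the left Bol identity B14, namely x*(y*(x*z)) = (x*(y*x))*z for all x,y,z ∈ R, holds if and only if t = 1 and s² = 1 (with no restriction on c₀). -/
import Mathlib


/-- The affine operation `a * b = t·a + s·b + c₀` on a commutative integral domain. -/
def affOp {R : Type*} [CommRing R] (t s c₀ : R) (a b : R) : R := t * a + s * b + c₀

/-- An affine quasigroup over an integral domain satisfies the left Bol identity B14,
`x(y(xz)) = (x(yx))z`, iff `t = 1` and `s² = 1`. -/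
theorem affine_B14_iff {R : Type*} [CommRing R] [IsDomain R]
    (t s c₀ : R) (ht : IsUnit t) (hs : IsUnit s) :
    (∀ x y z : R,
        affOp t s c₀ x (affOp t s c₀ y (affOp t s c₀ x z)) =
          affOp t s c₀ (affOp t s c₀ x (affOp t s c₀ y x)) z) ↔
      (t = 1 ∧ s ^ 2 = 1) := by
  simp only [affOp]
  constructor
  · intro h
    have e0 := h 0 0 0
    have e1 := h 1 0 0
    have e3 := h 0 0 1
    have hts : t * (t - 1) = 0 := by linear_combination e0 - e1
    have ht1 : t = 1 := by
      rcases mul_eq_zero.mp hts with h' | h'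
      · exact absurd h' ht.ne_zero
      · exact sub_eq_zero.mp h'
    have hss : s * (s ^ 2 - 1) = 0 := by linear_combination e3 - e0
    have hs1 : s ^ 2 = 1 := by
      rcases mul_eq_zero.mp hss with h' | h'
      · exact absurd h' hs.ne_zero
      · exact sub_eq_zero.mp h'
    exact ⟨ht1, hs1⟩
  · rintro ⟨rfl, hs1⟩ x y z
    have : s ^ 3 = s := by
      calc s ^ 3 = s ^ 2 * s := by ring
      _ = s := by rw [hs1, one_mul]
    linear_combination z * this + c₀ * hs1
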